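/- Asymptotics of derivative moments (equation (4.15) of the paper): Fix real numbers ã < b̃ and a natural number p. For n ≥ 1 define a_n = √(2n)·(1 + ã·n^{−1/3}), b_n = √(2n)·(1 − b̃·n^{−1/3}), u_n = a_n·b_n/2, and let F_n : ℝ → ℝ be the real-analytic function F_n(u) = ∑_{j=0}^{∞} u^j/(n+j)!. Then lim_{n→∞} √(2π) · n^{1/6 + 2p/3} · (n/e)^n · (1/p!) · (iteratedDeriv p F_n)(u_n) = (b̃ − ã)^{−(p+1)}. -/

import Mathlib

open Filter Real

open Topology

private lemma aux_fact_le (m k c : ℕ) (hc : c ≤ m + 1) :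
    c ^ k * m.factorial ≤ (m + k).factorial := by
  induction k with
  | zero => simp
  | succ k ih =>
    calc c ^ (k+1) * m.factorial = c * (c ^ k * m.factorial) := by ring
    _ ≤ c * (m + k).factorial := Nat.mul_le_mul_left _ ih
    _ ≤ (m + k + 1) * (m + k).factorial := Nat.mul_le_mul_right _ (by omega)
    _ = (m + (k + 1)).factorial := rfl

private lemma aux_summable_bound (R : ℝ) (hR : 1 ≤ R) :
    Summable (fun j : ℕ => (j : ℝ) * R ^ j / j.factorial) := by
  apply Summable.of_nonneg_of_le (fun j => by positivity)
    (fun j => ?_) (Real.summable_pow_div_factorial (2 * R))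
  have h1 : (j : ℝ) ≤ 2 ^ j := by exact_mod_cast (Nat.lt_two_pow_self (n := j)).le
  rw [mul_pow]
  gcongr

private lemma hasDerivAt_series (b : ℕ → ℝ) (hb : ∀ j, |b j| ≤ 1 / j.factorial) (x : ℝ) :
    HasDerivAt (fun y : ℝ => ∑' j : ℕ, b j * y ^ j)
      (∑' j : ℕ, ((j : ℝ) + 1) * b (j + 1) * x ^ j) x := by
  set R : ℝ := |x| + 1 with hR
  have hR1 : 1 ≤ R := by rw [hR]; linarith [abs_nonneg x]
  have hxR : x ∈ Metric.ball (0:ℝ) R := by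
    simp only [Metric.mem_ball, dist_zero_right, Real.norm_eq_abs, hR]
    linarith
  have hu : Summable (fun j : ℕ => (j : ℝ) * R ^ j / j.factorial) :=
    aux_summable_bound R hR1
  have hbound : ∀ (j : ℕ) (y : ℝ), |y| ≤ R →
      ‖b j * ((j : ℝ) * y ^ (j - 1))‖ ≤ (j : ℝ) * R ^ j / j.factorial := by
    intro j y hy
    rw [Real.norm_eq_abs, abs_mul, abs_mul, abs_pow, Nat.abs_cast]
    calc |b j| * ((j:ℝ) * |y| ^ (j-1)) ≤ (1 / j.factorial) * ((j:ℝ) * R ^ j) := by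
          apply mul_le_mul (hb j) ?_ (by positivity) (by positivity)
          gcongr
          calc |y| ^ (j - 1) ≤ R ^ (j-1) := by gcongr
          _ ≤ R ^ j := pow_le_pow_right₀ hR1 (Nat.sub_le j 1)
    _ = (j:ℝ) * R ^ j / j.factorial := by ring
  have hsum0 : Summable (fun j : ℕ => b j * x ^ j) := by
    apply Summable.of_norm
    apply Summable.of_nonneg_of_le (fun j => norm_nonneg _)
      (fun j => ?_) (Real.summable_pow_div_factorial R)
    rw [Real.norm_eq_abs, abs_mul, abs_pow]
    have hx : |x| ^ j ≤ R ^ j := by gcongr; rw [hR]; linarith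
    calc |b j| * |x| ^ j ≤ (1 / j.factorial) * R ^ j :=
          mul_le_mul (hb j) hx (by positivity) (by positivity)
    _ = R ^ j / j.factorial := by ring
  have key : HasDerivAt (fun y : ℝ => ∑' j : ℕ, b j * y ^ j)
      (∑' j : ℕ, b j * ((j : ℝ) * x ^ (j - 1))) x := by
    refine hasDerivAt_tsum_of_isPreconnected hu Metric.isOpen_ball
      ((convex_ball (0:ℝ) R).isPreconnected)
      (fun j y _ => (hasDerivAt_pow j y).const_mul (b j))
      (fun j y hy => hbound j y ?_) hxR hsum0 hxR
    have := mem_ball_zero_iff.mp hy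
    rw [Real.norm_eq_abs] at this; linarith
  convert key using 1
  have hsum : Summable (fun j : ℕ => b j * ((j : ℝ) * x ^ (j - 1))) := by
    apply Summable.of_norm
    apply Summable.of_nonneg_of_le (fun j => norm_nonneg _)
      (fun j => hbound j x (by rw [hR]; linarith)) hu
  rw [Summable.tsum_eq_zero_add hsum]
  simp only [Nat.cast_zero, zero_mul, mul_zero, zero_add]
  apply tsum_congr
  intro j
  simp only [Nat.add_sub_cancel]
  push_cast
  ring

private lemma descFactorial_mul_factorial (p j : ℕ) :
    (p + j).descFactorial p * j.factorial = (p + j).factorial := by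
  rw [Nat.descFactorial_eq_factorial_mul_choose]
  have h := Nat.choose_mul_factorial_mul_factorial (Nat.le_add_right p j)
  rw [Nat.add_sub_cancel_left] at h
  calc p.factorial * (p+j).choose p * j.factorial
      = (p+j).choose p * p.factorial * j.factorial := by ring
  _ = (p+j).factorial := h

private lemma iteratedDeriv_F (n p : ℕ) :
    iteratedDeriv p (fun u : ℝ => ∑' j : ℕ, u ^ j / ((n + j).factorial : ℝ))
      = fun u : ℝ => ∑' j : ℕ,
          ((p + j).descFactorial p : ℝ) * u ^ j / ((n + p + j).factorial : ℝ) := by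
  induction p with
  | zero => simp [iteratedDeriv_zero]
  | succ p ih =>
    rw [iteratedDeriv_succ, ih]
    funext u
    set b : ℕ → ℝ := fun j =>
      ((p + j).descFactorial p : ℝ) / ((n + p + j).factorial : ℝ) with hbdef
    have hb : ∀ j, |b j| ≤ 1 / j.factorial := by
      intro j
      have hpos : (0:ℝ) ≤ b j := by rw [hbdef]; positivity
      rw [abs_of_nonneg hpos, hbdef]
      rw [div_le_div_iff₀ (by positivity) (by positivity), one_mul]
      have : (p + j).descFactorial p * j.factorial ≤ (n + p + j).factorial := by
        rw [descFactorial_mul_factorial]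
        exact Nat.factorial_le (by omega)
      exact_mod_cast this
    have hfun : (fun y : ℝ => ∑' j : ℕ,
        ((p + j).descFactorial p : ℝ) * y ^ j / ((n + p + j).factorial : ℝ))
        = fun y : ℝ => ∑' j : ℕ, b j * y ^ j := by
      funext y
      exact tsum_congr fun j => by rw [hbdef]; ring
    rw [hfun, (hasDerivAt_series b hb u).deriv]
    apply tsum_congr
    intro j
    have hnat : (p + 1 + j).descFactorial (p + 1)
        = (j + 1) * ((p + (j + 1)).descFactorial p) := by
      have e2 : p + 1 + j = p + (j + 1) := by omega
      rw [Nat.descFactorial_succ, e2]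
      congr 1
      omega
    have harg : n + p + (j + 1) = n + (p + 1) + j := by omega
    rw [hbdef]
    simp only [harg, hnat]
    push_cast
    ring

private lemma W_bounds (n p : ℕ) (hn : 1 ≤ n) : ∀ k : ℕ,
    1 - ((k : ℝ) * ((p : ℝ) + k)) / n
        ≤ (n:ℝ)^k * ((n+p).factorial : ℝ) / (((n+p+k).factorial : ℝ))
    ∧ (n:ℝ)^k * ((n+p).factorial : ℝ) / (((n+p+k).factorial : ℝ)) ≤ 1 := by
  intro k
  induction k with
  | zero =>
    have hF : (0:ℝ) < ((n+p).factorial : ℝ) := by positivity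
    norm_num [div_self hF.ne']
  | succ k ih =>
    obtain ⟨ih1, ih2⟩ := ih
    have hn0 : (0:ℝ) < n := by exact_mod_cast hn
    have hFk : (0:ℝ) < ((n+p+k).factorial : ℝ) := by positivity
    have hX : (0:ℝ) < (n:ℝ) + p + k + 1 := by positivity
    have hfac : ((n+p+(k+1)).factorial : ℝ) = ((n:ℝ)+p+k+1) * ((n+p+k).factorial : ℝ) := by
      rw [show n+p+(k+1) = (n+p+k)+1 from rfl, Nat.factorial_succ]
      push_cast; ring
    set W : ℝ := (n:ℝ)^k * ((n+p).factorial : ℝ) / (((n+p+k).factorial : ℝ)) with hW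
    have hW0 : 0 ≤ W := by rw [hW]; positivity
    have hsplit : (n:ℝ)^(k+1) * ((n+p).factorial : ℝ) / (((n+p+(k+1)).factorial : ℝ))
        = W * ((n:ℝ) / ((n:ℝ)+p+k+1)) := by
      rw [hfac, hW]; field_simp; ring
    set s : ℝ := (p:ℝ) + k + 1 with hs
    have hs0 : (0:ℝ) ≤ s := by rw [hs]; positivity
    have hr1 : (n:ℝ) / ((n:ℝ)+p+k+1) ≤ 1 := by
      rw [div_le_one hX]; linarith
    have hr0 : (0:ℝ) ≤ (n:ℝ) / ((n:ℝ)+p+k+1) := by positivity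
    have hXs : (n:ℝ)+p+k+1 = (n:ℝ) + s := by rw [hs]; ring
    have hr2 : 1 - s / n ≤ (n:ℝ) / ((n:ℝ)+p+k+1) := by
      rw [le_div_iff₀ hX, hXs]
      have key : (1 - s/n) * ((n:ℝ) + s) = (n:ℝ) - s^2/n := by
        field_simp; ring
      rw [key]
      have : 0 ≤ s^2 / n := div_nonneg (sq_nonneg s) hn0.le
      linarith
    constructor
    · rw [hsplit]
      have c1 : W * (1 - s/n) ≤ W * ((n:ℝ)/((n:ℝ)+p+k+1)) :=
        mul_le_mul_of_nonneg_left hr2 hW0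
      have c2 : W * (1 - s/n) = W - W * (s/n) := by ring
      have c3 : W * (s/n) ≤ s/n := by
        calc W * (s/n) ≤ 1 * (s/n) := by
              apply mul_le_mul_of_nonneg_right ih2 (by positivity)
        _ = s/n := one_mul _
      have c4 : 1 - ((k:ℝ)*((p:ℝ)+k))/n - s/n ≤ W - W * (s/n) := by
        have := sub_le_sub ih1 (le_refl (W * (s/n)))
        linarith [c3]
      have h6 : ((k:ℝ)*((p:ℝ)+k))/n + ((p:ℝ)+(k:ℝ)+1)/n
          ≤ (((k:ℝ)+1) * ((p:ℝ) + ((k:ℝ)+1)))/n := by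
        rw [← add_div]
        apply div_le_div_of_nonneg_right ?_ hn0.le |>.trans_eq rfl
        nlinarith [Nat.cast_nonneg (α := ℝ) k, Nat.cast_nonneg (α := ℝ) p]
      have c5 : 1 - (((k:ℝ)+1) * ((p:ℝ) + ((k:ℝ)+1)))/n
          ≤ 1 - ((k:ℝ)*((p:ℝ)+k))/n - s/n := by
        rw [hs]; linarith
      push_cast
      push_cast at c5
      linarith
    · rw [hsplit]
      calc W * ((n:ℝ)/((n:ℝ)+p+k+1)) ≤ 1 * 1 :=
            mul_le_mul ih2 hr1 hr0 zero_le_one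
      _ = 1 := one_mul 1

private lemma nat_err_bound (p k : ℕ) :
    (p + k).descFactorial p * (k * (p + k))
      ≤ (p+2).factorial * ((k + (p+2)).choose (p+2)) := by
  have h1 : (k + (p+2)).descFactorial (p+2)
      = (p+2).factorial * ((k + (p+2)).choose (p+2)) :=
    Nat.descFactorial_eq_factorial_mul_choose _ _
  rw [← h1]
  have e1 : k + (p+2) = ((k+p)+1)+1 := by omega
  rw [e1, Nat.succ_descFactorial_succ, Nat.succ_descFactorial_succ]
  have e2 : p + k = k + p := by omega
  rw [e2]
  calc (k+p).descFactorial p * (k * (k + p))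
      = (k * (k+p)) * (k+p).descFactorial p := by ring
  _ ≤ ((k+p+1+1) * (k+p+1)) * (k+p).descFactorial p := by
      apply Nat.mul_le_mul_right
      exact Nat.mul_le_mul (by omega) (by omega)
  _ = (k+p+1+1) * ((k+p+1) * (k+p).descFactorial p) := by ring

private lemma tsum_bounds (n p : ℕ) (hn : 1 ≤ n) {q : ℝ} (hq0 : 0 ≤ q) (hq1 : q < 1) :
    (p.factorial : ℝ) / (((n+p).factorial : ℝ) * (1-q)^(p+1))
      - ((p+2).factorial : ℝ) / ((n:ℝ) * ((n+p).factorial : ℝ) * (1-q)^(p+3))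
      ≤ (∑' k : ℕ, ((p + k).descFactorial p : ℝ) * ((n:ℝ) * q) ^ k
          / ((n + p + k).factorial : ℝ))
    ∧ (∑' k : ℕ, ((p + k).descFactorial p : ℝ) * ((n:ℝ) * q) ^ k
          / ((n + p + k).factorial : ℝ))
      ≤ (p.factorial : ℝ) / (((n+p).factorial : ℝ) * (1-q)^(p+1)) := by
  have hn0 : (0:ℝ) < n := by exact_mod_cast hn
  have hF0 : (0:ℝ) < ((n+p).factorial : ℝ) := by positivity
  have hqn : ‖q‖ < 1 := by rw [Real.norm_eq_abs, abs_of_nonneg hq0]; exact hq1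
  set t : ℕ → ℝ := fun k => ((p + k).descFactorial p : ℝ) * ((n:ℝ) * q) ^ k
      / ((n + p + k).factorial : ℝ) with ht
  set A : ℕ → ℝ := fun k => ((p + k).descFactorial p : ℝ) * q ^ k
      / ((n+p).factorial : ℝ) with hA
  set B : ℕ → ℝ := fun k => ((p + k).descFactorial p : ℝ) * ((k:ℝ) * ((p:ℝ)+k)) * q ^ k
      / ((n:ℝ) * ((n+p).factorial : ℝ)) with hB
  -- HasSum for A
  have HA0 : HasSum (fun k : ℕ => ((k+p).choose p : ℝ) * q^k) (1/(1-q)^(p+1)) :=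
    hasSum_choose_mul_geometric_of_norm_lt_one p hqn
  have HA : HasSum A ((p.factorial : ℝ) / (((n+p).factorial : ℝ) * (1-q)^(p+1))) := by
    have hh := HA0.mul_left ((p.factorial : ℝ) / ((n+p).factorial : ℝ))
    have hfun : (fun k : ℕ => (p.factorial : ℝ) / ((n+p).factorial : ℝ)
        * (((k+p).choose p : ℝ) * q ^ k)) = A := by
      funext k
      have hd : ((p + k).descFactorial p : ℝ) = (p.factorial : ℝ) * ((p+k).choose p : ℝ) := by
        exact_mod_cast congrArg (Nat.cast (R := ℝ)) (Nat.descFactorial_eq_factorial_mul_choose (p+k) p)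
      have e : ((k+p).choose p : ℝ) = ((p+k).choose p : ℝ) := by rw [Nat.add_comm]
      show (p.factorial : ℝ) / ((n+p).factorial : ℝ) * (((k+p).choose p : ℝ) * q ^ k)
          = ((p + k).descFactorial p : ℝ) * q ^ k / ((n+p).factorial : ℝ)
      rw [hd, e]
      ring
    rw [hfun] at hh
    rw [mul_one_div, div_div] at hh
    exact hh
  -- HasSum for the p+2 comparison series
  have HB0 : HasSum (fun k : ℕ => ((k+(p+2)).choose (p+2) : ℝ) * q^k) (1/(1-q)^(p+3)) := by
    exact hasSum_choose_mul_geometric_of_norm_lt_one (p+2) hqn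
  set c : ℝ := ((p+2).factorial : ℝ) / ((n:ℝ) * ((n+p).factorial : ℝ)) with hc
  have hBle : ∀ k, B k ≤ c * (((k+(p+2)).choose (p+2) : ℝ) * q^k) := by
    intro k
    simp only [hB, hc]
    rw [div_mul_eq_mul_div, div_le_div_iff₀ (by positivity) (by positivity)]
    have key : ((p + k).descFactorial p : ℝ) * ((k:ℝ) * ((p:ℝ)+k))
        ≤ ((p+2).factorial : ℝ) * (((k+(p+2)).choose (p+2) : ℝ)) := by
      have := nat_err_bound p k
      have cast1 : ((p + k).descFactorial p * (k * (p + k)) : ℕ)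
          ≤ ((p+2).factorial * ((k + (p+2)).choose (p+2)) : ℕ) := this
      calc ((p + k).descFactorial p : ℝ) * ((k:ℝ) * ((p:ℝ)+k))
          = (((p + k).descFactorial p * (k * (p + k)) : ℕ) : ℝ) := by push_cast; ring
      _ ≤ (((p+2).factorial * ((k + (p+2)).choose (p+2)) : ℕ) : ℝ) := by exact_mod_cast cast1
      _ = _ := by push_cast; ring
    have hq2 : (0:ℝ) ≤ q^k := by positivity
    calc ((p + k).descFactorial p : ℝ) * ((k:ℝ) * ((p:ℝ)+k)) * q ^ k * ((n:ℝ) * ((n+p).factorial : ℝ))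
        ≤ ((p+2).factorial : ℝ) * (((k+(p+2)).choose (p+2) : ℝ)) * q^k * ((n:ℝ) * ((n+p).factorial : ℝ)) := by
          apply mul_le_mul_of_nonneg_right ?_ (by positivity)
          exact mul_le_mul_of_nonneg_right key hq2
    _ = ((p+2).factorial : ℝ) * ((((k+(p+2)).choose (p+2) : ℝ)) * q^k) * ((n:ℝ) * ((n+p).factorial : ℝ)) := by ring
  have hB0 : ∀ k, 0 ≤ B k := by intro k; simp only [hB]; positivity
  have SB : Summable B :=
    Summable.of_nonneg_of_le hB0 hBle (HB0.summable.mul_left c)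
  have hBsum : ∑' k, B k ≤ c * (1/(1-q)^(p+3)) := by
    have := Summable.tsum_le_tsum hBle SB (HB0.summable.mul_left c)
    rwa [(HB0.mul_left c).tsum_eq] at this
  -- relation t = A * W
  have htAW : ∀ k, t k = A k * ((n:ℝ)^k * ((n+p).factorial : ℝ) / (((n+p+k).factorial : ℝ))) := by
    intro k
    have hFk : (0:ℝ) < ((n+p+k).factorial : ℝ) := by positivity
    simp only [ht, hA, mul_pow]
    field_simp
  have hA0 : ∀ k, 0 ≤ A k := by intro k; simp only [hA]; positivity
  have ht0 : ∀ k, 0 ≤ t k := by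
    intro k
    simp only [ht]
    positivity
  have htA : ∀ k, t k ≤ A k := by
    intro k
    rw [htAW k]
    calc A k * ((n:ℝ)^k * ((n+p).factorial : ℝ) / (((n+p+k).factorial : ℝ)))
        ≤ A k * 1 := mul_le_mul_of_nonneg_left (W_bounds n p hn k).2 (hA0 k)
    _ = A k := mul_one _
  have hlow : ∀ k, A k - B k ≤ t k := by
    intro k
    rw [htAW k]
    have h1 : A k * (1 - ((k : ℝ) * ((p : ℝ) + k)) / n)
        ≤ A k * ((n:ℝ)^k * ((n+p).factorial : ℝ) / (((n+p+k).factorial : ℝ))) :=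
      mul_le_mul_of_nonneg_left (W_bounds n p hn k).1 (hA0 k)
    have h2 : A k * (1 - ((k : ℝ) * ((p : ℝ) + k)) / n) = A k - B k := by
      simp only [hA, hB]
      field_simp
    linarith
  have SA : Summable A := HA.summable
  have St : Summable t := Summable.of_nonneg_of_le ht0 htA SA
  constructor
  · have h3 : ∑' k, (A k - B k) ≤ ∑' k, t k := Summable.tsum_le_tsum hlow (SA.sub SB) St
    rw [Summable.tsum_sub SA SB, HA.tsum_eq] at h3
    have h4 : c * (1/(1-q)^(p+3))
        = ((p+2).factorial : ℝ) / ((n:ℝ) * ((n+p).factorial : ℝ) * (1-q)^(p+3)) := by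
      rw [hc, mul_one_div, div_div]
    rw [h4] at hBsum
    linarith
  · have h5 := Summable.tsum_le_tsum htA St SA
    rwa [HA.tsum_eq] at h5

private lemma tendsto_stirling' :
    Tendsto (fun n : ℕ => Real.sqrt (2*π*n) * ((n:ℝ)/Real.exp 1)^n / (n.factorial:ℝ))
      atTop (𝓝 1) := by
  have h1 := Stirling.tendsto_stirlingSeq_sqrt_pi
  have hpi : Real.sqrt π ≠ 0 := by positivity
  have h2 : Tendsto (fun n => Real.sqrt π / Stirling.stirlingSeq n) atTop
      (𝓝 (Real.sqrt π / Real.sqrt π)) := tendsto_const_nhds.div h1 hpi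
  rw [div_self hpi] at h2
  apply h2.congr'
  filter_upwards [eventually_ge_atTop 1] with n hn
  have hs : Stirling.stirlingSeq n
      = (n.factorial : ℝ) / (Real.sqrt (2*n) * ((n:ℝ)/Real.exp 1)^n) := rfl
  rw [hs, div_div_eq_mul_div]
  rw [show 2*π*(n:ℝ) = π*(2*(n:ℝ)) by ring, Real.sqrt_mul Real.pi_pos.le]
  ring

private lemma tendsto_fact_ratio (p : ℕ) :
    Tendsto (fun n : ℕ => (n.factorial : ℝ) * (n:ℝ)^p / ((n+p).factorial : ℝ))
      atTop (𝓝 1) := by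
  induction p with
  | zero =>
    have : ∀ n : ℕ, (n.factorial : ℝ) * (n:ℝ)^(0:ℕ) / ((n+0).factorial : ℝ) = 1 := by
      intro n
      have : (0:ℝ) < (n.factorial : ℝ) := by positivity
      simp [div_self this.ne']
    simp only [this]
    exact tendsto_const_nhds
  | succ p ih =>
    have hdiv := tendsto_natCast_div_add_atTop (𝕜 := ℝ) ((p:ℝ)+1)
    have hmul := ih.mul hdiv
    rw [mul_one] at hmul
    apply hmul.congr
    intro n
    have hfac : ((n+(p+1)).factorial : ℝ) = ((n:ℝ)+(p:ℝ)+1) * ((n+p).factorial : ℝ) := by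
      rw [show n+(p+1) = (n+p)+1 from rfl, Nat.factorial_succ]
      push_cast; ring
    have hF : (0:ℝ) < ((n+p).factorial : ℝ) := by positivity
    have hX : (0:ℝ) < (n:ℝ)+(p:ℝ)+1 := by positivity
    rw [hfac]
    field_simp
    ring

/-- Asymptotics of derivative moments (equation (4.15)): with
`a_n = √(2n)·(1 + ã·n^{−1/3})`, `b_n = √(2n)·(1 − b̃·n^{−1/3})`, `u_n = a_n·b_n/2`
and `F_n(u) = ∑_{j≥0} u^j/(n+j)!`, for fixed reals `ã < b̃` and `p : ℕ`,
`lim_{n→∞} √(2π) · n^{1/6 + 2p/3} · (n/e)^n · (1/p!) · F_n^{(p)}(u_n) = (b̃ − ã)^{−(p+1)}`. -/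
theorem derivative_moment_asymptotics (ta tb : ℝ) (h : ta < tb) (p : ℕ) :
    Tendsto (fun n : ℕ =>
        Real.sqrt (2 * π) * (n : ℝ) ^ ((1 : ℝ) / 6 + 2 * (p : ℝ) / 3) *
          ((n : ℝ) / Real.exp 1) ^ n * (1 / (p.factorial : ℝ)) *
          iteratedDeriv p (fun u : ℝ => ∑' j : ℕ, u ^ j / ((n + j).factorial : ℝ))
            (Real.sqrt (2 * n) * (1 + ta * (n : ℝ) ^ (-(1 : ℝ) / 3)) *
              (Real.sqrt (2 * n) * (1 - tb * (n : ℝ) ^ (-(1 : ℝ) / 3))) / 2))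
      atTop (nhds (((tb - ta) ^ (p + 1))⁻¹)) := by
  have hd : (0:ℝ) < tb - ta := sub_pos.mpr h
  obtain ⟨x, hxdef⟩ : ∃ x : ℕ → ℝ, x = fun n : ℕ => (n:ℝ) ^ (-(1:ℝ)/3) := ⟨_, rfl⟩
  obtain ⟨q, hqdef⟩ : ∃ q : ℕ → ℝ, q = fun n : ℕ => (1 + ta * x n) * (1 - tb * x n) :=
    ⟨_, rfl⟩
  obtain ⟨g, hgdef⟩ : ∃ g : ℕ → ℝ, g = fun n : ℕ => (n:ℝ) ^ ((1:ℝ)/3) * (1 - q n) :=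
    ⟨_, rfl⟩
  have hx : Tendsto x atTop (𝓝 0) := by
    rw [hxdef]
    have h1 : Tendsto (fun r : ℝ => r ^ (-(1:ℝ)/3)) atTop (𝓝 0) := by
      rw [show -(1:ℝ)/3 = -(1/3 : ℝ) by norm_num]
      exact tendsto_rpow_neg_atTop (by norm_num)
    exact h1.comp tendsto_natCast_atTop_atTop
  have hg_eq : ∀ᶠ n : ℕ in atTop, g n = (tb - ta) + ta * tb * x n := by
    filter_upwards [eventually_ge_atTop 1] with n hn
    have hn0 : (0:ℝ) < n := by exact_mod_cast hn
    have hzy : (n:ℝ)^((1:ℝ)/3) * x n = 1 := by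
      simp only [hxdef]
      rw [← Real.rpow_add hn0]
      norm_num
    simp only [hgdef, hqdef]
    calc (n:ℝ)^((1:ℝ)/3) * (1 - (1+ta*x n)*(1-tb*x n))
        = (tb - ta)*((n:ℝ)^((1:ℝ)/3) * x n)
          + ta*tb*(((n:ℝ)^((1:ℝ)/3) * x n) * x n) := by ring
    _ = (tb - ta) + ta*tb*x n := by rw [hzy]; ring
  have hg_lim : Tendsto g atTop (𝓝 (tb - ta)) := by
    have h1 : Tendsto (fun n : ℕ => (tb-ta) + ta*tb*x n) atTop (𝓝 ((tb-ta) + ta*tb*0)) :=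
      tendsto_const_nhds.add (hx.const_mul (ta*tb))
    rw [mul_zero, add_zero] at h1
    exact Tendsto.congr' (hg_eq.mono fun n e => e.symm) h1
  have hgpos : ∀ᶠ n : ℕ in atTop, 0 < g n := hg_lim.eventually (eventually_gt_nhds hd)
  have hfac1 : ∀ᶠ n : ℕ in atTop, 0 < 1 + ta * x n := by
    have h1 : Tendsto (fun n : ℕ => 1 + ta * x n) atTop (𝓝 (1 + ta*0)) :=
      tendsto_const_nhds.add (hx.const_mul ta)
    rw [mul_zero, add_zero] at h1
    exact h1.eventually (eventually_gt_nhds one_pos)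
  have hfac2 : ∀ᶠ n : ℕ in atTop, 0 < 1 - tb * x n := by
    have h1 : Tendsto (fun n : ℕ => 1 - tb * x n) atTop (𝓝 (1 - tb*0)) :=
      tendsto_const_nhds.sub (hx.const_mul tb)
    rw [mul_zero, sub_zero] at h1
    exact h1.eventually (eventually_gt_nhds one_pos)
  have h1q_ev : ∀ᶠ n : ℕ in atTop, 0 < 1 - q n := by
    filter_upwards [eventually_ge_atTop 1, hgpos] with n hn hgn
    have hn0 : (0:ℝ) < n := by exact_mod_cast hn
    have hz : (0:ℝ) < (n:ℝ)^((1:ℝ)/3) := Real.rpow_pos_of_pos hn0 _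
    rw [hgdef] at hgn
    simp only at hgn
    nlinarith
  obtain ⟨err, herrdef⟩ : ∃ err : ℕ → ℝ, err = fun n : ℕ =>
      ((p+2).factorial : ℝ)/(p.factorial : ℝ) * (1/((n:ℝ) * (1 - q n)^2)) := ⟨_, rfl⟩
  have herr : Tendsto err atTop (𝓝 0) := by
    have h2 : Tendsto (fun n : ℕ => x n/(g n)^2) atTop (𝓝 (0/(tb-ta)^2)) :=
      hx.div (hg_lim.pow 2) (pow_ne_zero _ hd.ne')
    rw [zero_div] at h2
    have h3 := h2.const_mul (((p+2).factorial : ℝ)/(p.factorial : ℝ))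
    rw [mul_zero] at h3
    apply Tendsto.congr' _ h3
    filter_upwards [eventually_ge_atTop 1, h1q_ev] with n hn h1q
    have hn0 : (0:ℝ) < n := by exact_mod_cast hn
    have hz : (0:ℝ) < (n:ℝ)^((1:ℝ)/3) := Real.rpow_pos_of_pos hn0 _
    have hxpos : (0:ℝ) < x n := by rw [hxdef]; exact Real.rpow_pos_of_pos hn0 _
    have hnx : (n:ℝ) * x n = (n:ℝ)^((1:ℝ)/3) * (n:ℝ)^((1:ℝ)/3) := by
      have e : (n:ℝ)^((1:ℝ)) * (n:ℝ)^(-(1:ℝ)/3)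
          = (n:ℝ)^((1:ℝ)/3) * (n:ℝ)^((1:ℝ)/3) := by
        rw [← Real.rpow_add hn0, ← Real.rpow_add hn0]; norm_num
      rw [Real.rpow_one] at e
      rw [hxdef]
      exact e
    rw [herrdef, hgdef]
    simp only
    congr 1
    rw [mul_pow, div_eq_div_iff (by positivity) (by positivity)]
    linear_combination ((1 - q n)^2) * hnx
  have hGp : Tendsto (fun n : ℕ => ((g n)^(p+1))⁻¹) atTop (𝓝 (((tb-ta)^(p+1))⁻¹)) :=
    (hg_lim.pow (p+1)).inv₀ (pow_ne_zero _ hd.ne')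
  obtain ⟨base, hbasedef⟩ : ∃ base : ℕ → ℝ, base = fun n : ℕ =>
      Real.sqrt (2*π) * (n:ℝ)^((1:ℝ)/6+2*(p:ℝ)/3) * ((n:ℝ)/Real.exp 1)^n
        / (((n+p).factorial : ℝ) * (1 - q n)^(p+1)) := ⟨_, rfl⟩
  have hbase : Tendsto base atTop (𝓝 (((tb-ta)^(p+1))⁻¹)) := by
    have hmul := (tendsto_stirling'.mul (tendsto_fact_ratio p)).mul hGp
    rw [one_mul, one_mul] at hmul
    apply Tendsto.congr' _ hmul
    filter_upwards [eventually_ge_atTop 1, h1q_ev] with n hn h1q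
    have hn0 : (0:ℝ) < n := by exact_mod_cast hn
    have e1 : Real.sqrt (2*π*(n:ℝ)) = Real.sqrt (2*π) * (n:ℝ)^((1:ℝ)/2) := by
      rw [Real.sqrt_mul (by positivity)]
      congr 1
      exact Real.sqrt_eq_rpow (n:ℝ)
    have e2 : ((n:ℝ)^((1:ℝ)/3))^(p+1) = (n:ℝ)^(((p:ℝ)+1)/3) := by
      rw [← Real.rpow_natCast ((n:ℝ)^((1:ℝ)/3)) (p+1), ← Real.rpow_mul hn0.le]
      congr 1
      push_cast; ring
    have e3 : (n:ℝ)^(p:ℕ) = (n:ℝ)^((p:ℝ)) := (Real.rpow_natCast _ p).symm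
    have e4 : (n:ℝ)^((1:ℝ)/6+2*(p:ℝ)/3) * (n:ℝ)^(((p:ℝ)+1)/3)
        = (n:ℝ)^((1:ℝ)/2) * (n:ℝ)^((p:ℝ)) := by
      rw [← Real.rpow_add hn0, ← Real.rpow_add hn0]
      congr 1; ring
    have hF : (0:ℝ) < ((n+p).factorial : ℝ) := by positivity
    have hfa : (0:ℝ) < (n.factorial : ℝ) := by positivity
    have hY : (0:ℝ) < (1 - q n)^(p+1) := by positivity
    have hzp : (0:ℝ) < (n:ℝ)^(((p:ℝ)+1)/3) := Real.rpow_pos_of_pos hn0 _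
    rw [hbasedef, hgdef]
    simp only
    rw [mul_pow, e1, e2, e3]
    rw [div_mul_div_comm, ← div_eq_mul_inv, div_div]
    rw [div_eq_div_iff (by positivity) (by positivity)]
    linear_combination (-(Real.sqrt (2*π) * ((n:ℝ)/Real.exp 1)^n * (n.factorial : ℝ)
        * ((n+p).factorial : ℝ) * (1 - q n)^(p+1))) * e4
  have hlowlim : Tendsto (fun n : ℕ => base n * (1 - err n)) atTop
      (𝓝 (((tb-ta)^(p+1))⁻¹)) := by
    have h1 : Tendsto (fun n : ℕ => (1:ℝ) - err n) atTop (𝓝 (1 - 0)) :=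
      tendsto_const_nhds.sub herr
    rw [sub_zero] at h1
    have h2 := hbase.mul h1
    rwa [mul_one] at h2
  apply tendsto_of_tendsto_of_tendsto_of_le_of_le' hlowlim hbase
  · -- lower bound
    filter_upwards [eventually_ge_atTop 1, h1q_ev, hfac1, hfac2] with n hn h1q hf1 hf2
    have hn0 : (0:ℝ) < n := by exact_mod_cast hn
    have hq0 : 0 ≤ q n := by
      have : 0 < q n := by rw [hqdef]; exact mul_pos hf1 hf2
      linarith
    have hq1 : q n < 1 := by linarith
    have harg : Real.sqrt (2 * (n:ℝ)) * (1 + ta * (n:ℝ) ^ (-(1:ℝ)/3)) *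
        (Real.sqrt (2 * (n:ℝ)) * (1 - tb * (n:ℝ) ^ (-(1:ℝ)/3))) / 2 = (n:ℝ) * q n := by
      have h2n : (0:ℝ) ≤ 2*(n:ℝ) := by positivity
      have hss : Real.sqrt (2*(n:ℝ)) * Real.sqrt (2*(n:ℝ)) = 2*(n:ℝ) :=
        Real.mul_self_sqrt h2n
      rw [hqdef, hxdef]
      simp only
      calc Real.sqrt (2 * (n:ℝ)) * (1 + ta * (n:ℝ) ^ (-(1:ℝ)/3)) *
          (Real.sqrt (2 * (n:ℝ)) * (1 - tb * (n:ℝ) ^ (-(1:ℝ)/3))) / 2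
          = (Real.sqrt (2*(n:ℝ)) * Real.sqrt (2*(n:ℝ)))
            * ((1 + ta * (n:ℝ) ^ (-(1:ℝ)/3)) * (1 - tb * (n:ℝ) ^ (-(1:ℝ)/3))) / 2 := by
            ring
      _ = (n:ℝ) * ((1 + ta * (n:ℝ) ^ (-(1:ℝ)/3)) * (1 - tb * (n:ℝ) ^ (-(1:ℝ)/3))) := by
            rw [hss]; ring
    have hiter : iteratedDeriv p (fun u : ℝ => ∑' j : ℕ, u ^ j / ((n + j).factorial : ℝ))
        ((n:ℝ) * q n)
        = ∑' k : ℕ, ((p + k).descFactorial p : ℝ) * ((n:ℝ) * q n) ^ k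
            / ((n + p + k).factorial : ℝ) := by
      rw [iteratedDeriv_F n p]
    rw [harg, hiter]
    obtain ⟨hlowD, _⟩ := tsum_bounds n p hn hq0 hq1
    have hF : (0:ℝ) < ((n+p).factorial : ℝ) := by positivity
    have hp' : (0:ℝ) < (p.factorial : ℝ) := by positivity
    have hCn : (0:ℝ) ≤ Real.sqrt (2*π) * (n:ℝ)^((1:ℝ)/6+2*(p:ℝ)/3)
        * ((n:ℝ)/Real.exp 1)^n * (1/(p.factorial : ℝ)) := by positivity
    have step := mul_le_mul_of_nonneg_left hlowD hCn
    refine le_trans (le_of_eq ?_) step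
    rw [hbasedef, herrdef]
    simp only
    rw [show p+3 = (p+1)+2 from rfl, pow_add]
    field_simp
    ring
  · -- upper bound
    filter_upwards [eventually_ge_atTop 1, h1q_ev, hfac1, hfac2] with n hn h1q hf1 hf2
    have hn0 : (0:ℝ) < n := by exact_mod_cast hn
    have hq0 : 0 ≤ q n := by
      have : 0 < q n := by rw [hqdef]; exact mul_pos hf1 hf2
      linarith
    have hq1 : q n < 1 := by linarith
    have harg : Real.sqrt (2 * (n:ℝ)) * (1 + ta * (n:ℝ) ^ (-(1:ℝ)/3)) *
        (Real.sqrt (2 * (n:ℝ)) * (1 - tb * (n:ℝ) ^ (-(1:ℝ)/3))) / 2 = (n:ℝ) * q n := by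
      have h2n : (0:ℝ) ≤ 2*(n:ℝ) := by positivity
      have hss : Real.sqrt (2*(n:ℝ)) * Real.sqrt (2*(n:ℝ)) = 2*(n:ℝ) :=
        Real.mul_self_sqrt h2n
      rw [hqdef, hxdef]
      simp only
      calc Real.sqrt (2 * (n:ℝ)) * (1 + ta * (n:ℝ) ^ (-(1:ℝ)/3)) *
          (Real.sqrt (2 * (n:ℝ)) * (1 - tb * (n:ℝ) ^ (-(1:ℝ)/3))) / 2
          = (Real.sqrt (2*(n:ℝ)) * Real.sqrt (2*(n:ℝ)))
            * ((1 + ta * (n:ℝ) ^ (-(1:ℝ)/3)) * (1 - tb * (n:ℝ) ^ (-(1:ℝ)/3))) / 2 := by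
            ring
      _ = (n:ℝ) * ((1 + ta * (n:ℝ) ^ (-(1:ℝ)/3)) * (1 - tb * (n:ℝ) ^ (-(1:ℝ)/3))) := by
            rw [hss]; ring
    have hiter : iteratedDeriv p (fun u : ℝ => ∑' j : ℕ, u ^ j / ((n + j).factorial : ℝ))
        ((n:ℝ) * q n)
        = ∑' k : ℕ, ((p + k).descFactorial p : ℝ) * ((n:ℝ) * q n) ^ k
            / ((n + p + k).factorial : ℝ) := by
      rw [iteratedDeriv_F n p]
    rw [harg, hiter]
    obtain ⟨_, huppD⟩ := tsum_bounds n p hn hq0 hq1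
    have hF : (0:ℝ) < ((n+p).factorial : ℝ) := by positivity
    have hp' : (0:ℝ) < (p.factorial : ℝ) := by positivity
    have hCn : (0:ℝ) ≤ Real.sqrt (2*π) * (n:ℝ)^((1:ℝ)/6+2*(p:ℝ)/3)
        * ((n:ℝ)/Real.exp 1)^n * (1/(p.factorial : ℝ)) := by positivity
    have step := mul_le_mul_of_nonneg_left huppD hCn
    refine le_trans step (le_of_eq ?_)
    rw [hbasedef]
    simp only
    field_simp
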